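/- For every graph G, nucleus(G) is the intersection of all maximum independent sets S of G[L(G)] with no edges to L^c(G), and diadem(G) is the union of all such sets; moreover diadem(G) ⊆ corona(G) ∩ L(G). -/

import Mathlib

open Finset

variable {V : Type*} [Fintype V] [DecidableEq V] (G : SimpleGraph V) [DecidableRel G.Adj]

/-- `N(S)`: the set of vertices adjacent to some vertex of `S`. -/
def nbhd (S : Finset V) : Finset V := S.biUnion (fun v => G.neighborFinset v)

/-- `S` is an independent set of `G`. -/
def Indep (S : Finset V) : Prop := ∀ u ∈ S, ∀ v ∈ S, ¬ G.Adj u v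

/-- The difference `d_G(S) = |S| - |N(S)|`. -/
def diffI (S : Finset V) : ℤ := (S.card : ℤ) - ((nbhd G S).card : ℤ)

/-- `S` is a maximum independent set of `G`. -/
def IsMaxIndep (S : Finset V) : Prop :=
  Indep G S ∧ ∀ T : Finset V, Indep G T → T.card ≤ S.card

/-- `I` is a critical independent set of `G`. -/
def IsCritIndep (I : Finset V) : Prop :=
  Indep G I ∧ ∀ J : Finset V, Indep G J → diffI G J ≤ diffI G I

/-- `I` is a maximum critical independent set of `G`. -/
def IsMaxCritIndep (I : Finset V) : Prop :=
  IsCritIndep G I ∧ ∀ J : Finset V, IsCritIndep G J → J.card ≤ I.card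

/-- `core(G)`: intersection of all maximum independent sets. -/
def core : Set V := {v | ∀ S : Finset V, IsMaxIndep G S → v ∈ S}

/-- `corona(G)`: union of all maximum independent sets. -/
def corona : Set V := {v | ∃ S : Finset V, IsMaxIndep G S ∧ v ∈ S}

/-- `nucleus(G)`: intersection of all maximum critical independent sets. -/
def nucleus : Set V := {v | ∀ S : Finset V, IsMaxCritIndep G S → v ∈ S}

/-- `diadem(G)`: union of all maximum critical independent sets. -/
def diadem : Set V := {v | ∃ S : Finset V, IsMaxCritIndep G S ∧ v ∈ S}

/-- `ker(G)`: intersection of all critical independent sets. -/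
def kerS : Set V := {v | ∀ S : Finset V, IsCritIndep G S → v ∈ S}

/-- A matching of `G`, given as an involution of the vertex set:
unmatched vertices are fixed points, matched vertices are sent to their partner. -/
def IsMatching (M : V → V) : Prop :=
  Function.Involutive M ∧ ∀ v, M v ≠ v → G.Adj v (M v)

/-- Twice the number of edges of the matching `M`, i.e. the number of matched vertices. -/
def matchSize (M : V → V) : ℕ := (univ.filter fun v => M v ≠ v).card

/-- `M` is a maximum matching of `G`. -/
def IsMaxMatching (M : V → V) : Prop :=
  IsMatching G M ∧ ∀ M' : V → V, IsMatching G M' → matchSize M' ≤ matchSize M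

/-- `M` is a matching of the induced subgraph `G[L]`. -/
def IsMatchingOn (L : Finset V) (M : V → V) : Prop :=
  IsMatching G M ∧ ∀ v, M v ≠ v → v ∈ L

/-- `M` is a maximum matching of the induced subgraph `G[L]`. -/
def IsMaxMatchingOn (L : Finset V) (M : V → V) : Prop :=
  IsMatchingOn G L M ∧ ∀ M' : V → V, IsMatchingOn G L M' → matchSize M' ≤ matchSize M

/-- `S` is a maximum independent set of the induced subgraph `G[L]`. -/
def IsMaxIndepOn (L : Finset V) (S : Finset V) : Prop :=
  S ⊆ L ∧ Indep G S ∧ ∀ T : Finset V, T ⊆ L → Indep G T → T.card ≤ S.card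

/-- `core` of the induced subgraph `G[L]`. -/
def coreOn (L : Finset V) : Set V := {v | ∀ S : Finset V, IsMaxIndepOn G L S → v ∈ S}

/-- `D(G[L])`: vertices of `L` missed by some maximum matching of `G[L]`. -/
def Dset (L : Finset V) : Set V := {v | v ∈ L ∧ ∃ M : V → V, IsMaxMatchingOn G L M ∧ M v = v}

/-- The Larson boundary `∂_L(G)` of the set `L`. -/
def boundaryL (L : Finset V) : Set V := {v | v ∈ L ∧ ∃ w, w ∉ L ∧ G.Adj v w}

/-- The critical difference `d(G)`. -/
noncomputable def critDiff : ℤ := sSup {d : ℤ | ∃ X : Finset V, diffI G X = d}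

/-- The difference of `S` computed in the induced subgraph `G[L]`. -/
def diffOn (L : Finset V) (S : Finset V) : ℤ := (S.card : ℤ) - ((nbhd G S ∩ L).card : ℤ)

/-- The critical difference of the induced subgraph `G[L]`. -/
noncomputable def critDiffOn (L : Finset V) : ℤ := sSup {d : ℤ | ∃ X : Finset V, X ⊆ L ∧ diffOn G L X = d}

/-- `G` is a König–Egerváry graph: `α(G) + μ(G) = |V(G)|`. -/
def KonigEgervary : Prop :=
  ∃ (S : Finset V) (M : V → V), IsMaxIndep G S ∧ IsMaxMatching G M ∧
    2 * S.card + matchSize M = 2 * Fintype.card V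

/- ### Auxiliary lemmas -/

lemma mem_nbhd {S : Finset V} {v : V} : v ∈ nbhd G S ↔ ∃ u ∈ S, G.Adj u v := by
  simp [nbhd, SimpleGraph.mem_neighborFinset]

lemma nbhd_mono {S T : Finset V} (h : S ⊆ T) : nbhd G S ⊆ nbhd G T := by
  intro v hv
  rw [mem_nbhd] at hv ⊢
  obtain ⟨u, hu, ha⟩ := hv
  exact ⟨u, h hu, ha⟩

lemma nbhd_union (S T : Finset V) : nbhd G (S ∪ T) = nbhd G S ∪ nbhd G T := by
  ext v
  simp only [mem_nbhd, mem_union]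
  constructor
  · rintro ⟨u, hu | hu, ha⟩
    · exact Or.inl ⟨u, hu, ha⟩
    · exact Or.inr ⟨u, hu, ha⟩
  · rintro (⟨u, hu, ha⟩ | ⟨u, hu, ha⟩)
    · exact ⟨u, Or.inl hu, ha⟩
    · exact ⟨u, Or.inr hu, ha⟩

lemma indep_subset {S T : Finset V} (h : Indep G S) (hTS : T ⊆ S) : Indep G T :=
  fun u hu v hv => h u (hTS hu) v (hTS hv)

lemma hall_cond {A : Finset V} (hA : IsCritIndep G A) {T : Finset V} (hT : T ⊆ nbhd G A) :
    T.card ≤ (nbhd G T ∩ A).card := by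
  have hX : Indep G (A \ nbhd G T) := indep_subset G hA.1 sdiff_subset
  have h1 := hA.2 _ hX
  have h2 : nbhd G (A \ nbhd G T) ⊆ nbhd G A \ T := by
    intro v hv
    rw [mem_sdiff]
    refine ⟨nbhd_mono G sdiff_subset hv, ?_⟩
    intro hvT
    rw [mem_nbhd] at hv
    obtain ⟨x, hx, hadj⟩ := hv
    rw [mem_sdiff] at hx
    exact hx.2 ((mem_nbhd G).2 ⟨v, hvT, hadj.symm⟩)
  have c2 : (nbhd G (A \ nbhd G T)).card + T.card ≤ (nbhd G A).card := by
    have h3 := card_le_card h2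
    have h4 : (nbhd G A \ T).card + T.card = (nbhd G A).card :=
      card_sdiff_add_card_eq_card hT
    omega
  have c1 : (A \ nbhd G T).card + (A ∩ nbhd G T).card = A.card :=
    card_sdiff_add_card_inter A (nbhd G T)
  have hq : (nbhd G T ∩ A).card = (A ∩ nbhd G T).card := by rw [inter_comm]
  unfold diffI at h1
  omega

lemma exists_matching {A : Finset V} (hA : IsCritIndep G A) :
    ∃ f : V → V, (∀ x ∈ nbhd G A, f x ∈ A ∧ G.Adj x (f x)) ∧ Set.InjOn f ↑(nbhd G A) := by
  classical
  have key := (Finset.all_card_le_biUnion_card_iff_exists_injective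
      (fun x : {x // x ∈ nbhd G A} => G.neighborFinset ↑x ∩ A)).1 ?_
  · obtain ⟨f, hfinj, hf⟩ := key
    refine ⟨fun x => if h : x ∈ nbhd G A then f ⟨x, h⟩ else x, ?_, ?_⟩
    · intro x hx
      simp only [dif_pos hx]
      have := hf ⟨x, hx⟩
      rw [mem_inter, SimpleGraph.mem_neighborFinset] at this
      exact ⟨this.2, this.1⟩
    · intro x hx y hy hxy
      simp only [Finset.mem_coe] at hx hy
      simp only [dif_pos hx, dif_pos hy] at hxy
      exact Subtype.ext_iff.1 (hfinj hxy)
  · intro s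
    have himg : (s.image Subtype.val).card = s.card :=
      card_image_of_injective s Subtype.val_injective
    have hsub : s.image Subtype.val ⊆ nbhd G A := by
      intro x hx
      rw [mem_image] at hx
      obtain ⟨⟨y, hy⟩, _, rfl⟩ := hx
      exact hy
    have hbi : s.biUnion (fun x => G.neighborFinset ↑x ∩ A)
        = nbhd G (s.image Subtype.val) ∩ A := by
      ext a
      simp only [mem_biUnion, mem_inter, SimpleGraph.mem_neighborFinset, mem_nbhd, mem_image]
      constructor
      · rintro ⟨x, hx, hadj, haA⟩
        exact ⟨⟨↑x, ⟨x, hx, rfl⟩, hadj⟩, haA⟩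
      · rintro ⟨⟨u, ⟨x, hx, rfl⟩, hadj⟩, haA⟩
        exact ⟨x, hx, hadj, haA⟩
    rw [hbi, ← himg]
    exact hall_cond G hA hsub

lemma indep_card_le {A : Finset V} (hA : IsCritIndep G A) {T : Finset V} (hT : Indep G T)
    (hTL : T ⊆ A ∪ nbhd G A) : T.card ≤ A.card := by
  classical
  obtain ⟨f, hf, hinj⟩ := exists_matching G hA
  apply Finset.card_le_card_of_injOn (fun x => if x ∈ A then x else f x)
  · intro x hx
    by_cases h : x ∈ A
    · simpa [h] using h
    · have hxn : x ∈ nbhd G A := by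
        have := hTL hx; rw [mem_union] at this; tauto
      simpa [h] using (hf x hxn).1
  · intro x hx y hy hxy
    simp only [Finset.mem_coe] at hx hy
    by_cases h1 : x ∈ A <;> by_cases h2 : y ∈ A
    · simpa [h1, h2] using hxy
    · exfalso
      have hyn : y ∈ nbhd G A := by
        have := hTL hy; rw [mem_union] at this; tauto
      simp only [if_pos h1, if_neg h2] at hxy
      have hadj := (hf y hyn).2
      rw [← hxy] at hadj
      exact hT y hy x hx hadj
    · exfalso
      have hxn : x ∈ nbhd G A := by
        have := hTL hx; rw [mem_union] at this; tauto
      simp only [if_neg h1, if_pos h2] at hxy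
      have hadj := (hf x hxn).2
      rw [hxy] at hadj
      exact hT x hx y hy hadj
    · have hxn : x ∈ nbhd G A := by
        have := hTL hx; rw [mem_union] at this; tauto
      have hyn : y ∈ nbhd G A := by
        have := hTL hy; rw [mem_union] at this; tauto
      simp only [if_neg h1, if_neg h2] at hxy
      exact hinj (Finset.mem_coe.2 hxn) (Finset.mem_coe.2 hyn) hxy

lemma nbhd_diff_le (A : Finset V) {B : Finset V} (hB : IsCritIndep G B) :
    (nbhd G B \ nbhd G A).card ≤ (B \ A).card := by
  obtain ⟨f, hf, hinj⟩ := exists_matching G hB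
  apply Finset.card_le_card_of_injOn f
  · intro x hx
    rw [Finset.mem_coe, mem_sdiff] at hx ⊢
    obtain ⟨h1, h2⟩ := hx
    exact ⟨(hf x h1).1, fun hfA => h2 ((mem_nbhd G).2 ⟨f x, hfA, (hf x h1).2.symm⟩)⟩
  · exact hinj.mono (Finset.coe_subset.mpr sdiff_subset)

lemma claimC {A : Finset V} (hA : IsCritIndep G A) {T : Finset V} (hT : Indep G T)
    (hd : ∀ t ∈ T, t ∉ A ∪ nbhd G A) :
    (T.card : ℤ) ≤ ((nbhd G T \ (A ∪ nbhd G A)).card : ℤ) := by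
  have hTA : Disjoint A T := by
    rw [disjoint_right]
    intro a haT haA
    exact hd a haT (mem_union_left _ haA)
  have hATindep : Indep G (A ∪ T) := by
    intro u hu v hv hadj
    rw [mem_union] at hu hv
    rcases hu with hu | hu <;> rcases hv with hv | hv
    · exact hA.1 u hu v hv hadj
    · exact hd v hv (mem_union_right _ ((mem_nbhd G).2 ⟨u, hu, hadj⟩))
    · exact hd u hu (mem_union_right _ ((mem_nbhd G).2 ⟨v, hv, hadj.symm⟩))
    · exact hT u hu v hv hadj
  have h1 := hA.2 _ hATindep
  have hcard : (A ∪ T).card = A.card + T.card := card_union_of_disjoint hTA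
  have hnTA : ∀ a ∈ nbhd G T, a ∉ A := by
    intro a ha haA
    rw [mem_nbhd] at ha
    obtain ⟨t, ht, hadj⟩ := ha
    exact hd t ht (mem_union_right _ ((mem_nbhd G).2 ⟨a, haA, hadj.symm⟩))
  have e2 : nbhd G T \ nbhd G A = nbhd G T \ (A ∪ nbhd G A) := by
    ext a
    rw [mem_sdiff, mem_sdiff, mem_union]
    constructor
    · rintro ⟨h3, h4⟩
      exact ⟨h3, fun h => h.elim (hnTA a h3) h4⟩
    · rintro ⟨h3, h4⟩
      exact ⟨h3, fun h => h4 (Or.inr h)⟩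
  have e3 : (nbhd G (A ∪ T)).card
      = (nbhd G A).card + (nbhd G T \ nbhd G A).card := by
    rw [nbhd_union, ← Finset.union_sdiff_self_eq_union,
      card_union_of_disjoint disjoint_sdiff]
  unfold diffI at h1
  rw [e2] at e3
  omega

lemma decomp_sdiff {A B : Finset V} (hA : Indep G A) :
    B \ A = (B ∩ nbhd G A) ∪ (B \ (A ∪ nbhd G A)) := by
  ext x
  simp only [mem_sdiff, mem_inter, mem_union]
  constructor
  · rintro ⟨hxB, hxA⟩
    by_cases h : x ∈ nbhd G A
    · exact Or.inl ⟨hxB, h⟩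
    · exact Or.inr ⟨hxB, fun hh => hh.elim hxA h⟩
  · rintro (⟨hxB, hxn⟩ | ⟨hxB, hxn⟩)
    · refine ⟨hxB, fun hxA => ?_⟩
      rw [mem_nbhd] at hxn
      obtain ⟨u, hu, hadj⟩ := hxn
      exact hA u hu x hxA hadj
    · exact ⟨hxB, fun h => hxn (Or.inl h)⟩

lemma decomp_sdiff_card {A B : Finset V} (hA : Indep G A) :
    (B \ A).card = (B ∩ nbhd G A).card + (B \ (A ∪ nbhd G A)).card := by
  rw [decomp_sdiff G hA]
  apply card_union_of_disjoint
  rw [disjoint_right]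
  intro a ha haI
  rw [mem_sdiff, mem_union] at ha
  exact ha.2 (Or.inr (mem_inter.1 haI).2)

lemma nbhd_decomp_card {A B : Finset V} (hA : Indep G A) :
    (nbhd G B \ nbhd G A).card
      = (nbhd G B ∩ A).card + (nbhd G B \ (A ∪ nbhd G A)).card := by
  have e : nbhd G B \ nbhd G A = (nbhd G B ∩ A) ∪ (nbhd G B \ (A ∪ nbhd G A)) := by
    ext x
    simp only [mem_sdiff, mem_inter, mem_union]
    constructor
    · rintro ⟨hxB, hxn⟩
      by_cases h : x ∈ A
      · exact Or.inl ⟨hxB, h⟩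
      · exact Or.inr ⟨hxB, fun hh => hh.elim h hxn⟩
    · rintro (⟨hxB, hxA⟩ | ⟨hxB, hxn⟩)
      · refine ⟨hxB, fun hxn => ?_⟩
        rw [mem_nbhd] at hxn
        obtain ⟨u, hu, hadj⟩ := hxn
        exact hA u hu x hxA hadj
      · exact ⟨hxB, fun h => hxn (Or.inr h)⟩
  rw [e]
  apply card_union_of_disjoint
  rw [disjoint_right]
  intro a ha haI
  rw [mem_sdiff, mem_union] at ha
  exact ha.2 (Or.inl (mem_inter.1 haI).2)

lemma span_lemma {A B : Finset V} (hA : IsMaxCritIndep G A) (hB : IsMaxCritIndep G B) :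
    B ⊆ A ∪ nbhd G A ∧ nbhd G B ⊆ A ∪ nbhd G A := by
  classical
  have hcardAB : A.card = B.card := le_antisymm (hB.2 _ hA.1) (hA.2 _ hB.1)
  have hdAB : diffI G A = diffI G B := le_antisymm (hB.1.2 _ hA.1.1) (hA.1.2 _ hB.1.1)
  have hn : (nbhd G A).card = (nbhd G B).card := by unfold diffI at hdAB; omega
  -- b1 ≤ |nbhd B1 \ L| ≤ w
  have hB1indep : Indep G (B \ (A ∪ nbhd G A)) := indep_subset G hB.1.1 sdiff_subset
  have hB1out : ∀ t ∈ B \ (A ∪ nbhd G A), t ∉ A ∪ nbhd G A := fun t ht => (mem_sdiff.1 ht).2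
  have hb1key := claimC G hA.1 hB1indep hB1out
  have hsubW : nbhd G (B \ (A ∪ nbhd G A)) \ (A ∪ nbhd G A) ⊆ nbhd G B \ (A ∪ nbhd G A) := by
    intro x hx
    rw [mem_sdiff] at hx
    exact mem_sdiff.2 ⟨nbhd_mono G sdiff_subset hx.1, hx.2⟩
  have hsubWc := card_le_card hsubW
  -- a1 ≤ w'
  have hA1indep : Indep G (A \ (B ∪ nbhd G B)) := indep_subset G hA.1.1 sdiff_subset
  have hA1out : ∀ t ∈ A \ (B ∪ nbhd G B), t ∉ B ∪ nbhd G B := fun t ht => (mem_sdiff.1 ht).2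
  have ha1key := claimC G hB.1 hA1indep hA1out
  have hsubW' : nbhd G (A \ (B ∪ nbhd G B)) \ (B ∪ nbhd G B) ⊆ nbhd G A \ (B ∪ nbhd G B) := by
    intro x hx
    rw [mem_sdiff] at hx
    exact mem_sdiff.2 ⟨nbhd_mono G sdiff_subset hx.1, hx.2⟩
  have hsubW'c := card_le_card hsubW'
  -- |B \ A| = |A \ B|
  have hsd : (B \ A).card = (A \ B).card := by
    have h1 : (B \ A).card + (B ∩ A).card = B.card := card_sdiff_add_card_inter B A
    have h2 : (A \ B).card + (A ∩ B).card = A.card := card_sdiff_add_card_inter A B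
    rw [inter_comm] at h1
    omega
  -- w ≤ a1
  have hw_a1 : (nbhd G B \ (A ∪ nbhd G A)).card ≤ (A \ (B ∪ nbhd G B)).card := by
    have h3 := nbhd_diff_le G A hB.1
    have d1 := nbhd_decomp_card G (A := A) (B := B) hA.1.1
    have d2 := decomp_sdiff_card G (A := B) (B := A) hB.1.1
    have hic : (nbhd G B ∩ A).card = (A ∩ nbhd G B).card := by rw [inter_comm]
    omega
  -- w' ≤ b1
  have hw'_b1 : (nbhd G A \ (B ∪ nbhd G B)).card ≤ (B \ (A ∪ nbhd G A)).card := by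
    have h3 := nbhd_diff_le G B hA.1
    have d1 := nbhd_decomp_card G (A := B) (B := A) hB.1.1
    have d2 := decomp_sdiff_card G (A := A) (B := B) hA.1.1
    have hic : (nbhd G A ∩ B).card = (B ∩ nbhd G A).card := by rw [inter_comm]
    omega
  -- chain: b1 ≤ w ≤ a1 ≤ w' ≤ b1, so all equal
  have hkey : ((nbhd G (B \ (A ∪ nbhd G A)) \ (A ∪ nbhd G A)).card : ℤ)
      = ((B \ (A ∪ nbhd G A)).card : ℤ) := by omega
  have hAB1disj : Disjoint A (B \ (A ∪ nbhd G A)) := by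
    rw [disjoint_right]
    intro a ha haA
    exact hB1out a ha (mem_union_left _ haA)
  have hIindep : Indep G (A ∪ B \ (A ∪ nbhd G A)) := by
    intro u hu v hv hadj
    rw [mem_union] at hu hv
    rcases hu with hu | hu <;> rcases hv with hv | hv
    · exact hA.1.1 u hu v hv hadj
    · exact hB1out v hv (mem_union_right _ ((mem_nbhd G).2 ⟨u, hu, hadj⟩))
    · exact hB1out u hu (mem_union_right _ ((mem_nbhd G).2 ⟨v, hv, hadj.symm⟩))
    · exact hB1indep u hu v hv hadj
  have hnB1A : ∀ a ∈ nbhd G (B \ (A ∪ nbhd G A)), a ∉ A := by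
    intro a ha haA
    rw [mem_nbhd] at ha
    obtain ⟨t, ht, hadj⟩ := ha
    exact hB1out t ht (mem_union_right _ ((mem_nbhd G).2 ⟨a, haA, hadj.symm⟩))
  have e2 : nbhd G (B \ (A ∪ nbhd G A)) \ nbhd G A
      = nbhd G (B \ (A ∪ nbhd G A)) \ (A ∪ nbhd G A) := by
    ext a
    rw [mem_sdiff, mem_sdiff, mem_union]
    constructor
    · rintro ⟨h3, h4⟩
      exact ⟨h3, fun h => h.elim (hnB1A a h3) h4⟩
    · rintro ⟨h3, h4⟩
      exact ⟨h3, fun h => h4 (Or.inr h)⟩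
  have e3 : (nbhd G (A ∪ B \ (A ∪ nbhd G A))).card
      = (nbhd G A).card + (nbhd G (B \ (A ∪ nbhd G A)) \ (A ∪ nbhd G A)).card := by
    rw [nbhd_union, ← Finset.union_sdiff_self_eq_union,
      card_union_of_disjoint disjoint_sdiff, e2]
  have hIcard : (A ∪ B \ (A ∪ nbhd G A)).card = A.card + (B \ (A ∪ nbhd G A)).card :=
    card_union_of_disjoint hAB1disj
  have hIcrit : IsCritIndep G (A ∪ B \ (A ∪ nbhd G A)) := by
    refine ⟨hIindep, fun T hT => ?_⟩
    have h1 := hA.1.2 _ hT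
    unfold diffI at h1 ⊢
    rw [e3, hIcard]
    push_cast
    omega
  have hfin := hA.2 _ hIcrit
  rw [hIcard] at hfin
  have hB10 : B \ (A ∪ nbhd G A) = ∅ := card_eq_zero.1 (by omega)
  have hW0 : nbhd G B \ (A ∪ nbhd G A) = ∅ := card_eq_zero.1 (by omega)
  exact ⟨sdiff_eq_empty_iff_subset.1 hB10, sdiff_eq_empty_iff_subset.1 hW0⟩

lemma P_iff {J : Finset V} (hJ : IsMaxCritIndep G J) (S : Finset V) :
    (IsMaxIndepOn G (J ∪ nbhd G J) S ∧
      (∀ u ∈ S, ∀ w, w ∉ J ∪ nbhd G J → ¬ G.Adj u w))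
    ↔ IsMaxCritIndep G S := by
  constructor
  · rintro ⟨⟨hSL, hSind, hSmax⟩, hout⟩
    have hJS : J.card ≤ S.card := hSmax J subset_union_left hJ.1.1
    have hNSL : nbhd G S ⊆ J ∪ nbhd G J := by
      intro v hv
      rw [mem_nbhd] at hv
      obtain ⟨u, hu, hadj⟩ := hv
      by_contra hvL
      exact hout u hu v hvL hadj
    have hdisjS : Disjoint S (nbhd G S) := by
      rw [disjoint_left]
      intro a ha han
      rw [mem_nbhd] at han
      obtain ⟨u, hu, hadj⟩ := han
      exact hSind u hu a ha hadj
    have hdisjJ : Disjoint J (nbhd G J) := by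
      rw [disjoint_left]
      intro a ha han
      rw [mem_nbhd] at han
      obtain ⟨u, hu, hadj⟩ := han
      exact hJ.1.1 u hu a ha hadj
    have hcard1 : (S ∪ nbhd G S).card = S.card + (nbhd G S).card :=
      card_union_of_disjoint hdisjS
    have hcard2 : (J ∪ nbhd G J).card = J.card + (nbhd G J).card :=
      card_union_of_disjoint hdisjJ
    have hsub : S ∪ nbhd G S ⊆ J ∪ nbhd G J := union_subset hSL hNSL
    have hle := card_le_card hsub
    have hdS : diffI G J ≤ diffI G S := by
      unfold diffI
      omega
    refine ⟨⟨hSind, fun T hT => le_trans (hJ.1.2 T hT) hdS⟩, fun T hT => ?_⟩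
    exact le_trans (hJ.2 T hT) hJS
  · intro hS
    obtain ⟨hSsub, hNsub⟩ := span_lemma G hJ hS
    have hJcS : J.card ≤ S.card := hS.2 _ hJ.1
    refine ⟨⟨hSsub, hS.1.1, fun T hTL hTind => ?_⟩, fun u hu w hw hadj => ?_⟩
    · exact le_trans (indep_card_le G hJ.1 hTind hTL) hJcS
    · exact hw (hNsub ((mem_nbhd G).2 ⟨u, hu, hadj⟩))

lemma exists_maxIndep_superset {S : Finset V} (hS : IsCritIndep G S) :
    ∃ K : Finset V, IsMaxIndep G K ∧ S ⊆ K := by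
  classical
  have hne : ((univ : Finset (Finset V)).filter
      (fun T => Indep G T ∧ T ⊆ univ \ (S ∪ nbhd G S))).Nonempty := by
    refine ⟨∅, ?_⟩
    simp only [mem_filter, mem_univ, true_and]
    exact ⟨fun u hu => absurd hu (notMem_empty u), empty_subset _⟩
  obtain ⟨T, hTmem, hTmax⟩ := Finset.exists_max_image _ Finset.card hne
  rw [mem_filter] at hTmem
  obtain ⟨-, hTind, hTsub⟩ := hTmem
  have hTout : ∀ t ∈ T, t ∉ S ∪ nbhd G S := by
    intro t ht
    have := hTsub ht
    rw [mem_sdiff] at this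
    exact this.2
  have hSTdisj : Disjoint S T := by
    rw [disjoint_right]
    intro a ha haS
    exact hTout a ha (mem_union_left _ haS)
  refine ⟨S ∪ T, ⟨?_, ?_⟩, subset_union_left⟩
  · intro u hu v hv hadj
    rw [mem_union] at hu hv
    rcases hu with hu | hu <;> rcases hv with hv | hv
    · exact hS.1 u hu v hv hadj
    · exact hTout v hv (mem_union_right _ ((mem_nbhd G).2 ⟨u, hu, hadj⟩))
    · exact hTout u hu (mem_union_right _ ((mem_nbhd G).2 ⟨v, hv, hadj.symm⟩))
    · exact hTind u hu v hv hadj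
  · intro K hK
    have h1 : (K ∩ (S ∪ nbhd G S)).card ≤ S.card :=
      indep_card_le G hS (indep_subset G hK inter_subset_left) inter_subset_right
    have h2 : (K \ (S ∪ nbhd G S)).card ≤ T.card := by
      apply hTmax
      rw [mem_filter]
      refine ⟨mem_univ _, indep_subset G hK sdiff_subset, ?_⟩
      intro a ha
      rw [mem_sdiff] at ha ⊢
      exact ⟨mem_univ _, ha.2⟩
    have h3 : (K ∩ (S ∪ nbhd G S)).card + (K \ (S ∪ nbhd G S)).card = K.card := by
      exact card_inter_add_card_sdiff K (S ∪ nbhd G S)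
    have h4 : (S ∪ T).card = S.card + T.card := card_union_of_disjoint hSTdisj
    omega

theorem stmt8 (J : Finset V) (hJ : IsMaxCritIndep G J) :
    nucleus G = {v | ∀ S : Finset V,
        IsMaxIndepOn G (J ∪ nbhd G J) S →
          (∀ u ∈ S, ∀ w, w ∉ J ∪ nbhd G J → ¬ G.Adj u w) → v ∈ S} ∧
    diadem G = {v | ∃ S : Finset V,
        IsMaxIndepOn G (J ∪ nbhd G J) S ∧
          (∀ u ∈ S, ∀ w, w ∉ J ∪ nbhd G J → ¬ G.Adj u w) ∧ v ∈ S} ∧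
    diadem G ⊆ corona G ∩ ↑(J ∪ nbhd G J) := by
  refine ⟨?_, ?_, ?_⟩
  · ext v
    simp only [nucleus, Set.mem_setOf_eq]
    constructor
    · intro h S h1 h2
      exact h S ((P_iff G hJ S).1 ⟨h1, h2⟩)
    · intro h S hS
      obtain ⟨h1, h2⟩ := (P_iff G hJ S).2 hS
      exact h S h1 h2
  · ext v
    simp only [diadem, Set.mem_setOf_eq]
    constructor
    · rintro ⟨S, hS, hv⟩
      obtain ⟨h1, h2⟩ := (P_iff G hJ S).2 hS
      exact ⟨S, h1, h2, hv⟩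
    · rintro ⟨S, h1, h2, hv⟩
      exact ⟨S, (P_iff G hJ S).1 ⟨h1, h2⟩, hv⟩
  · rintro v ⟨S, hS, hvS⟩
    obtain ⟨K, hK, hsub⟩ := exists_maxIndep_superset G hS.1
    refine ⟨⟨K, hK, hsub hvS⟩, ?_⟩
    exact Finset.mem_coe.2 ((span_lemma G hJ hS).1 hvS)
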